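/- Let N be a positive integer and a an integer with 0 ≤ a ≤ (N−1)/2. Then J maps C_a into C_a, the restriction of J to C_a has simple spectrum (its eigenvalues are distinct, with dim C_a of them counted with multiplicity), and every eigenvector of J lying in C_a is an eigenvector of F_N. -/

import Mathlib

open Complex

/-- The (non-normalized) discrete Fourier transform on `ZMod N`:
`(dft N f) k = ∑_{j=0}^{N-1} exp(-2πi j k / N) f(j)`. -/
noncomputable def dft (N : ℕ) (f : ZMod N → ℂ) : ZMod N → ℂ := fun k =>
  ∑ j ∈ Finset.range N,
    Complex.exp (-(2 * Real.pi * Complex.I * (j : ℂ) * (k.val : ℂ)) / (N : ℂ)) * f (j : ZMod N)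

/-- The discrete interval `[-a, a]`, viewed as a subset of `ZMod N`. -/
def dInterval (N : ℕ) (a : ℤ) : Set (ZMod N) := {x | ∃ j : ℤ, |j| ≤ a ∧ (j : ZMod N) = x}

/-- The discrete Fourier transform as a linear map. -/
noncomputable def dftL (N : ℕ) : (ZMod N → ℂ) →ₗ[ℂ] (ZMod N → ℂ) where
  toFun f := dft N f
  map_add' f g := by
    funext k
    simp only [dft, Pi.add_apply, mul_add]
    rw [Finset.sum_add_distrib]
  map_smul' c f := by
    funext k
    simp only [dft, Pi.smul_apply, smul_eq_mul, RingHom.id_apply]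
    rw [Finset.mul_sum]
    exact Finset.sum_congr rfl fun j _ => by ring

/-- The subspace `L²(S)` of functions on `ZMod N` vanishing outside `S`. -/
noncomputable def supportedIn (N : ℕ) (S : Set (ZMod N)) : Submodule ℂ (ZMod N → ℂ) where
  carrier := {f | ∀ x ∉ S, f x = 0}
  add_mem' := by
    intro f g hf hg x hx
    simp [hf x hx, hg x hx]
  zero_mem' := by
    intro x _
    rfl
  smul_mem' := by
    intro c f hf x hx
    simp [hf x hx]

/-- The space `C_a` of functions supported in `[-a,a]` whose Fourier transform is
also supported in `[-a,a]`. -/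
noncomputable def Ca (N : ℕ) (a : ℤ) : Submodule ℂ (ZMod N → ℂ) :=
  supportedIn N (dInterval N a) ⊓ Submodule.comap (dftL N) (supportedIn N (dInterval N a))

/-- `A(x) = cos(π(2x+1)/N) − cos(π(2a+1)/N)`. -/
noncomputable def acoef (N : ℕ) (a : ℤ) (x : ZMod N) : ℝ :=
  Real.cos (Real.pi * (2 * (x.val : ℝ) + 1) / N) - Real.cos (Real.pi * (2 * (a : ℝ) + 1) / N)

/-- `B(x) = −2 cos(π(2a+1)/N) cos(2πx/N)`. -/
noncomputable def bcoef (N : ℕ) (a : ℤ) (x : ZMod N) : ℝ :=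
  -2 * Real.cos (Real.pi * (2 * (a : ℝ) + 1) / N) * Real.cos (2 * Real.pi * (x.val : ℝ) / N)

/-- The operator `J = J₁ − cos(π(2a+1)/N) J₀`:
`(J f)(x) = A(x) f(x+1) + B(x) f(x) + A(x−1) f(x−1)`. -/
noncomputable def Jop (N : ℕ) (a : ℤ) (f : ZMod N → ℂ) : ZMod N → ℂ := fun x =>
  (acoef N a x : ℂ) * f (x + 1) + (bcoef N a x : ℂ) * f x + (acoef N a (x - 1) : ℂ) * f (x - 1)


set_option linter.unusedSectionVars false

namespace DFTaux
variable (N : ℕ) [NeZero N]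

noncomputable def eta (N : ℕ) : ℂ := Complex.exp (Real.pi * I / N)
noncomputable def etab (N : ℕ) : ℂ := Complex.exp (-(Real.pi * I / N))

lemma eta_ne_zero : eta N ≠ 0 := Complex.exp_ne_zero _

lemma eta_mul_etab : eta N * etab N = 1 := by
  rw [eta, etab, ← Complex.exp_add]; simp

lemma etab_eq_inv : etab N = (eta N)⁻¹ :=
  eq_inv_of_mul_eq_one_left (by rw [mul_comm]; exact eta_mul_etab N)

lemma eta_pow_two_N : eta N ^ (2 * N) = 1 := by
  rw [eta, ← Complex.exp_nat_mul]
  have hN : (N : ℂ) ≠ 0 := Nat.cast_ne_zero.2 (NeZero.ne N)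
  have : ((2 * N : ℕ) : ℂ) * (Real.pi * I / N) = 2 * Real.pi * I := by
    push_cast; field_simp
  rw [this]
  simpa using Complex.exp_int_mul_two_pi_mul_I 1

noncomputable def w (x : ZMod N) : ℂ := eta N ^ (2 * x.val)

lemma w_ne_zero (x : ZMod N) : w N x ≠ 0 := pow_ne_zero _ (eta_ne_zero N)

lemma eta_pow_mod (m : ℕ) : eta N ^ (2 * (m % N)) = eta N ^ (2 * m) := by
  conv_rhs => rw [← Nat.div_add_mod m N]
  rw [show 2 * (N * (m / N) + m % N) = 2 * N * (m / N) + 2 * (m % N) by ring,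
    pow_add, show eta N ^ (2 * N * (m / N)) = (eta N ^ (2 * N)) ^ (m / N) from pow_mul _ _ _,
    eta_pow_two_N, one_pow, one_mul]

lemma w_add (x y : ZMod N) : w N (x + y) = w N x * w N y := by
  rw [w, w, w, ZMod.val_add, eta_pow_mod, ← pow_add]
  ring_nf

lemma w_zero : w N 0 = 1 := by simp [w, ZMod.val_zero]

lemma w_neg (x : ZMod N) : w N (-x) = (w N x)⁻¹ := by
  have h : w N x * w N (-x) = 1 := by rw [← w_add]; simp [w_zero]
  exact (inv_eq_of_mul_eq_one_right h).symm

lemma w_mul_val (x k : ZMod N) : w N (x * k) = eta N ^ (2 * (x.val * k.val)) := by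
  rw [w, ZMod.val_mul, eta_pow_mod]

lemma w_natCast_mul (j : ℕ) (k : ZMod N) (hj : j < N) :
    w N ((j : ZMod N) * k) = eta N ^ (2 * (j * k.val)) := by
  rw [w_mul_val, ZMod.val_cast_of_lt hj]

lemma dft_eq_sum (f : ZMod N → ℂ) (k : ZMod N) :
    dft N f k = ∑ x : ZMod N, (w N (x * k))⁻¹ * f x := by
  rw [dft]
  refine Finset.sum_nbij' (fun j => (j : ZMod N)) (fun x => x.val) ?_ ?_ ?_ ?_ ?_
  · intro j hj; exact Finset.mem_univ _
  · intro x _; exact Finset.mem_range.2 (ZMod.val_lt x)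
  · intro j hj; exact ZMod.val_cast_of_lt (Finset.mem_range.1 hj)
  · intro x _; exact ZMod.natCast_rightInverse x
  · intro j hj
    congr 1
    rw [w_natCast_mul N j k (Finset.mem_range.1 hj), eta, ← Complex.exp_nat_mul,
      ← Complex.exp_neg]
    congr 1
    have hN : (N : ℂ) ≠ 0 := Nat.cast_ne_zero.2 (NeZero.ne N)
    push_cast
    field_simp

lemma dft_eq_sum' (f : ZMod N → ℂ) (k : ZMod N) :
    dft N f k = ∑ x : ZMod N, w N (-(x * k)) * f x := by
  rw [dft_eq_sum]
  exact Finset.sum_congr rfl fun x _ => by rw [w_neg]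

noncomputable def c0 (N : ℕ) (a : ℤ) : ℂ := ((Real.cos (Real.pi * (2 * (a:ℝ) + 1) / N) : ℝ) : ℂ)

lemma exp_pi_div (n : ℕ) : Complex.exp (((Real.pi * (n : ℝ) / N : ℝ) : ℂ) * I) = eta N ^ n := by
  rw [eta, ← Complex.exp_nat_mul]
  congr 1
  have hN : (N : ℂ) ≠ 0 := Nat.cast_ne_zero.2 (NeZero.ne N)
  push_cast
  field_simp

lemma cos_real_eq (r : ℝ) (n : ℕ)
    (h : ((r : ℂ)) * I = ((Real.pi * (n : ℝ) / N : ℝ) : ℂ) * I) :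
    ((Real.cos r : ℝ) : ℂ) = (eta N ^ n + (eta N ^ n)⁻¹) / 2 := by
  rw [Complex.ofReal_cos, Complex.cos, neg_mul, Complex.exp_neg, h, exp_pi_div]

lemma acoef_complex (a : ℤ) (x : ZMod N) :
    (acoef N a x : ℂ) = (eta N * w N x + (eta N * w N x)⁻¹) / 2 - c0 N a := by
  have h := cos_real_eq N (Real.pi * (2 * (x.val : ℝ) + 1) / N) (2 * x.val + 1)
    (by push_cast; ring)
  have hw : eta N * w N x = eta N ^ (2 * x.val + 1) := by rw [w, pow_succ]; ring
  rw [acoef, Complex.ofReal_sub, h, c0, hw]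

lemma acoef_complex' (a : ℤ) (x : ZMod N) :
    (acoef N a x : ℂ) = (eta N * w N x + etab N * w N (-x)) / 2 - c0 N a := by
  rw [acoef_complex, mul_inv, ← etab_eq_inv, ← w_neg]

lemma bcoef_complex (a : ℤ) (x : ZMod N) :
    (bcoef N a x : ℂ) = -(c0 N a) * (w N x + (w N x)⁻¹) := by
  have h := cos_real_eq N (2 * Real.pi * (x.val : ℝ) / N) (2 * x.val)
    (by push_cast; ring)
  have hw : w N x = eta N ^ (2 * x.val) := rfl
  rw [bcoef, Complex.ofReal_mul, Complex.ofReal_mul, h, c0, hw]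
  push_cast
  ring

lemma bcoef_complex' (a : ℤ) (x : ZMod N) :
    (bcoef N a x : ℂ) = -(c0 N a) * (w N x + w N (-x)) := by
  rw [bcoef_complex, ← w_neg]

lemma w_one : w N 1 = eta N ^ 2 := by
  rcases eq_or_lt_of_le (Nat.one_le_iff_ne_zero.2 (NeZero.ne N)) with h | h
  · have hN : N = 1 := h.symm
    subst hN
    have h1 : (1 : ZMod 1) = 0 := Subsingleton.elim _ _
    rw [h1, w_zero]
    have := eta_pow_two_N 1
    simpa using this.symm
  · rw [w, ZMod.val_one_eq_one_mod, Nat.mod_eq_of_lt h]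

lemma w_neg_one : w N (-1) = etab N ^ 2 := by
  rw [w_neg, w_one, ← inv_pow, ← etab_eq_inv]

lemma key (a : ℤ) (y k : ZMod N) :
    w N (-((y-1)*k)) * (acoef N a (y-1) : ℂ) + w N (-(y*k)) * (bcoef N a y : ℂ)
      + w N (-((y+1)*k)) * (acoef N a y : ℂ)
    = (acoef N a k : ℂ) * w N (-(y*(k+1))) + (bcoef N a k : ℂ) * w N (-(y*k))
      + (acoef N a (k-1) : ℂ) * w N (-(y*(k-1))) := by
  have h1 : w N (-((y-1)*k)) = w N (-(y*k)) * w N k := by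
    rw [show -((y-1)*k) = -(y*k) + k by ring, w_add]
  have h2 : w N (-((y+1)*k)) = w N (-(y*k)) * w N (-k) := by
    rw [show -((y+1)*k) = -(y*k) + -k by ring, w_add]
  have h3 : w N (-(y*(k+1))) = w N (-(y*k)) * w N (-y) := by
    rw [show -(y*(k+1)) = -(y*k) + -y by ring, w_add]
  have h4 : w N (-(y*(k-1))) = w N (-(y*k)) * w N y := by
    rw [show -(y*(k-1)) = -(y*k) + y by ring, w_add]
  have h5 : w N (y-1) = w N y * etab N ^ 2 := by
    rw [show y-1 = y + (-1) by ring, w_add, w_neg_one]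
  have h6 : w N (-(y-1)) = w N (-y) * eta N ^ 2 := by
    rw [show -(y-1) = -y + 1 by ring, w_add, w_one]
  have h7 : w N (k-1) = w N k * etab N ^ 2 := by
    rw [show k-1 = k + (-1) by ring, w_add, w_neg_one]
  have h8 : w N (-(k-1)) = w N (-k) * eta N ^ 2 := by
    rw [show -(k-1) = -k + 1 by ring, w_add, w_one]
  rw [acoef_complex' N a (y-1), acoef_complex' N a y, acoef_complex' N a k,
    acoef_complex' N a (k-1), bcoef_complex' N a y, bcoef_complex' N a k,
    h1, h2, h3, h4, h5, h6, h7, h8]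
  linear_combination (w N (-(y*k)) * eta N *
    (w N (-y) * w N k - w N y * w N (-k)) / 2) * (eta_mul_etab N)

theorem dft_Jop_comm (a : ℤ) (f : ZMod N → ℂ) :
    dft N (Jop N a f) = Jop N a (dft N f) := by
  funext k
  show dft N (Jop N a f) k
    = (acoef N a k : ℂ) * dft N f (k+1) + (bcoef N a k : ℂ) * dft N f k
      + (acoef N a (k-1) : ℂ) * dft N f (k-1)
  rw [dft_eq_sum', dft_eq_sum', dft_eq_sum', dft_eq_sum']
  have lhs_split : ∑ x : ZMod N, w N (-(x * k)) * Jop N a f x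
      = (∑ x : ZMod N, w N (-(x * k)) * ((acoef N a x : ℂ) * f (x+1)))
        + (∑ x : ZMod N, w N (-(x * k)) * ((bcoef N a x : ℂ) * f x))
        + (∑ x : ZMod N, w N (-(x * k)) * ((acoef N a (x-1) : ℂ) * f (x-1))) := by
    rw [← Finset.sum_add_distrib, ← Finset.sum_add_distrib]
    exact Finset.sum_congr rfl fun x _ => by rw [Jop]; ring
  have t1 : (∑ x : ZMod N, w N (-(x * k)) * ((acoef N a x : ℂ) * f (x+1)))
      = ∑ y : ZMod N, w N (-((y-1) * k)) * ((acoef N a (y-1) : ℂ) * f y) := by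
    rw [← Equiv.sum_comp (Equiv.subRight (1 : ZMod N))
      (fun x => w N (-(x * k)) * ((acoef N a x : ℂ) * f (x+1)))]
    exact Finset.sum_congr rfl fun y _ => by simp
  have t3 : (∑ x : ZMod N, w N (-(x * k)) * ((acoef N a (x-1) : ℂ) * f (x-1)))
      = ∑ y : ZMod N, w N (-((y+1) * k)) * ((acoef N a y : ℂ) * f y) := by
    rw [← Equiv.sum_comp (Equiv.addRight (1 : ZMod N))
      (fun x => w N (-(x * k)) * ((acoef N a (x-1) : ℂ) * f (x-1)))]
    exact Finset.sum_congr rfl fun y _ => by simp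
  have comb : ∀ g1 g2 g3 : ZMod N → ℂ,
      (∑ y : ZMod N, g1 y) + (∑ y : ZMod N, g2 y) + (∑ y : ZMod N, g3 y)
        = ∑ y : ZMod N, (g1 y + g2 y + g3 y) := fun g1 g2 g3 => by
    rw [Finset.sum_add_distrib, Finset.sum_add_distrib]
  rw [lhs_split, t1, t3]
  simp only [Finset.mul_sum]
  rw [comb, comb]
  refine Finset.sum_congr rfl fun y _ => ?_
  linear_combination (f y) * key N a y k

lemma acoef_int (a j : ℤ) :
    acoef N a ((j : ℤ) : ZMod N)
      = Real.cos (Real.pi * (2*(j:ℝ)+1)/N) - Real.cos (Real.pi * (2*(a:ℝ)+1)/N) := by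
  rw [acoef]
  have hval : ((((j : ZMod N)).val : ℤ)) = j % N := ZMod.val_intCast j
  have hNr : (N:ℝ) ≠ 0 := Nat.cast_ne_zero.2 (NeZero.ne N)
  have h2 : ((((j : ZMod N)).val : ℕ) : ℝ) = (j : ℝ) - (N:ℝ) * ((j / N : ℤ) : ℝ) := by
    have h3 : ((j % N : ℤ) : ℝ) = (j:ℝ) - (N:ℝ)*((j/N:ℤ):ℝ) := by
      rw [Int.emod_def]; push_cast; ring
    rw [← h3, ← hval]; push_cast; ring
  have harg : Real.pi * (2 * ((((j : ZMod N)).val : ℕ) : ℝ) + 1) / N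
      = Real.pi * (2*(j:ℝ)+1)/N + (-(j / N) : ℤ) * (2*Real.pi) := by
    rw [h2]; push_cast; field_simp; ring
  rw [harg, Real.cos_add_int_mul_two_pi]

lemma acoef_at_a (a : ℤ) : acoef N a ((a : ℤ) : ZMod N) = 0 := by
  rw [acoef_int]; ring

lemma acoef_at_neg_a_one (a : ℤ) : acoef N a ((-a-1 : ℤ) : ZMod N) = 0 := by
  rw [acoef_int]
  have h : Real.pi * (2*((-a-1:ℤ):ℝ)+1)/N = -(Real.pi * (2*(a:ℝ)+1)/N) := by
    push_cast; ring
  rw [h, Real.cos_neg, sub_self]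

lemma acoef_pos (a : ℤ) (haN : 2*a+1 ≤ (N:ℤ)) (j : ℤ) (hj1 : -a ≤ j) (hj2 : j ≤ a - 1) :
    0 < acoef N a ((j : ℤ) : ZMod N) := by
  rw [acoef_int]
  have hNpos : (0:ℝ) < N := by
    have : 0 < N := Nat.pos_of_ne_zero (NeZero.ne N)
    exact_mod_cast this
  have hpi := Real.pi_pos
  set m : ℤ := |2*j+1| with hm
  have hm0 : (0:ℤ) ≤ m := abs_nonneg _
  have hm2 : m ≤ 2*a - 1 := abs_le.2 ⟨by linarith, by linarith⟩
  have hcosm : Real.cos (Real.pi * (2*(j:ℝ)+1)/N) = Real.cos (Real.pi * (m:ℝ)/N) := by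
    rcases abs_cases (2*j+1) with ⟨he,_⟩|⟨he,_⟩
    · have hr : (m:ℝ) = 2*(j:ℝ)+1 := by rw [hm, he]; push_cast; ring
      rw [hr]
    · have hr : (m:ℝ) = -(2*(j:ℝ)+1) := by rw [hm, he]; push_cast; ring
      have h4 : Real.pi * (m:ℝ)/N = -(Real.pi * (2*(j:ℝ)+1)/N) := by rw [hr]; ring
      rw [h4, Real.cos_neg]
  rw [hcosm]
  have hlt : Real.pi * (m:ℝ)/N < Real.pi * (2*(a:ℝ)+1)/N := by
    have hmr : (m:ℝ) < 2*(a:ℝ)+1 := by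
      have h5 : (m:ℝ) ≤ 2*(a:ℝ)-1 := by exact_mod_cast hm2
      linarith
    gcongr
  have h0le : 0 ≤ Real.pi * (m:ℝ)/N := by
    have hmr : (0:ℝ) ≤ (m:ℝ) := by exact_mod_cast hm0
    positivity
  have hle : Real.pi * (2*(a:ℝ)+1)/N ≤ Real.pi := by
    rw [div_le_iff₀ hNpos]
    have : (2*(a:ℝ)+1) ≤ (N:ℝ) := by exact_mod_cast haN
    nlinarith
  have := Real.cos_lt_cos_of_nonneg_of_le_pi h0le hle hlt
  linarith

lemma cast_mem_dInterval (a j : ℤ) (hj : |j| ≤ a) : ((j:ℤ) : ZMod N) ∈ dInterval N a :=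
  ⟨j, hj, rfl⟩

/-- If `x ∉ [-a,a]` but `x+1 ∈ [-a,a]` then `x = -a-1` (mod N). -/
lemma step_up (a : ℤ) (x : ZMod N) (hx : x ∉ dInterval N a)
    (hx1 : (x + 1) ∈ dInterval N a) : x = ((-a-1 : ℤ) : ZMod N) := by
  obtain ⟨j, hj, hjx⟩ := hx1
  by_cases hja : j = -a
  · subst hja
    push_cast at hjx ⊢
    linear_combination -hjx
  · exfalso
    refine hx ⟨j - 1, by rw [abs_le] at hj ⊢; omega, ?_⟩
    push_cast
    linear_combination hjx

lemma step_down (a : ℤ) (x : ZMod N) (hx : x ∉ dInterval N a)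
    (hx1 : (x - 1) ∈ dInterval N a) : x = ((a+1 : ℤ) : ZMod N) := by
  obtain ⟨j, hj, hjx⟩ := hx1
  by_cases hja : j = a
  · subst hja
    push_cast at hjx ⊢
    linear_combination -hjx
  · exfalso
    refine hx ⟨j + 1, by rw [abs_le] at hj ⊢; omega, ?_⟩
    push_cast
    linear_combination hjx

lemma Jop_supported (a : ℤ) (f : ZMod N → ℂ)
    (hf : ∀ x ∉ dInterval N a, f x = 0) :
    ∀ x ∉ dInterval N a, Jop N a f x = 0 := by
  intro x hx
  rw [Jop, hf x hx]
  have h1 : (acoef N a x : ℂ) * f (x+1) = 0 := by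
    by_cases hx1 : (x+1) ∈ dInterval N a
    · rw [step_up N a x hx hx1, acoef_at_neg_a_one]
      simp
    · rw [hf _ hx1, mul_zero]
  have h3 : (acoef N a (x-1) : ℂ) * f (x-1) = 0 := by
    by_cases hx1 : (x-1) ∈ dInterval N a
    · have hxe := step_down N a x hx hx1
      have : x - 1 = ((a : ℤ) : ZMod N) := by rw [hxe]; push_cast; ring
      rw [this, acoef_at_a]
      simp
    · rw [hf _ hx1, mul_zero]
  rw [h1, h3]
  ring

lemma Jop_sub (a : ℤ) (f g : ZMod N → ℂ) :
    Jop N a (f - g) = Jop N a f - Jop N a g := by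
  funext x; simp only [Jop, Pi.sub_apply]; ring

lemma Jop_smul (a : ℤ) (s : ℂ) (f : ZMod N → ℂ) :
    Jop N a (s • f) = s • Jop N a f := by
  funext x; simp only [Jop, Pi.smul_apply, smul_eq_mul]; ring

lemma eigen_vanish (a : ℤ) (ha : 0 ≤ a) (haN : 2*a+1 ≤ (N:ℤ)) (c : ℂ) (f : ZMod N → ℂ)
    (hf : ∀ x ∉ dInterval N a, f x = 0) (hJ : Jop N a f = c • f)
    (h0 : f (((-a : ℤ) : ZMod N)) = 0) : f = 0 := by
  have claim : ∀ n : ℕ, (n : ℤ) ≤ 2*a → f (((-a + n : ℤ) : ZMod N)) = 0 := by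
    intro n
    induction n using Nat.strong_induction_on with
    | _ n ih =>
      intro hn
      match n with
      | 0 => simpa using h0
      | Nat.succ m =>
        have hm2a : (m : ℤ) + 1 ≤ 2*a := by exact_mod_cast hn
        set x : ZMod N := ((-a + m : ℤ) : ZMod N) with hxdef
        have hx := congrFun hJ x
        simp only [Jop, Pi.smul_apply, smul_eq_mul] at hx
        have hfm : f x = 0 := ih m (Nat.lt_succ_self m) (by omega)
        have hterm3 : (acoef N a (x-1) : ℂ) * f (x-1) = 0 := by
          match m with
          | 0 =>
            have hx1 : x - 1 = ((-a-1 : ℤ) : ZMod N) := by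
              rw [hxdef]; push_cast; ring
            rw [hx1, acoef_at_neg_a_one]
            simp
          | Nat.succ m' =>
            have hx1 : x - 1 = ((-a + m' : ℤ) : ZMod N) := by
              rw [hxdef]; push_cast; ring
            rw [hx1, ih m' (by omega) (by omega), mul_zero]
        have hApos : 0 < acoef N a x := by
          rw [hxdef]
          exact acoef_pos N a haN (-a + m) (by omega) (by omega)
        have hfx1 : f (x + 1) = 0 := by
          have h5 : (acoef N a x : ℂ) * f (x+1) = 0 := by
            rw [hfm] at hx
            linear_combination hx - hterm3
          have h6 : (acoef N a x : ℂ) ≠ 0 := by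
            exact_mod_cast ne_of_gt hApos
          exact (mul_eq_zero.1 h5).resolve_left h6
        have hx2 : x + 1 = ((-a + (m+1 : ℕ) : ℤ) : ZMod N) := by
          rw [hxdef]; push_cast; ring
        rw [← hx2]
        exact hfx1
  funext y
  by_cases hy : y ∈ dInterval N a
  · obtain ⟨j, hj, rfl⟩ := hy
    rw [abs_le] at hj
    have hje : j = -a + ((j + a).toNat : ℤ) := by omega
    have := claim (j + a).toNat (by omega)
    rw [← hje] at this
    exact this
  · exact hf y hy

lemma eigen_unique (a : ℤ) (ha : 0 ≤ a) (haN : 2*a+1 ≤ (N:ℤ)) (c : ℂ) (f g : ZMod N → ℂ)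
    (hf : ∀ x ∉ dInterval N a, f x = 0) (hg : ∀ x ∉ dInterval N a, g x = 0)
    (hJf : Jop N a f = c • f) (hJg : Jop N a g = c • g) (hfne : f ≠ 0) :
    ∃ s : ℂ, g = s • f := by
  have hfa : f (((-a : ℤ) : ZMod N)) ≠ 0 := by
    intro h0
    exact hfne (eigen_vanish N a ha haN c f hf hJf h0)
  set s : ℂ := g (((-a : ℤ) : ZMod N)) / f (((-a : ℤ) : ZMod N)) with hs
  refine ⟨s, ?_⟩
  have hh : g - s • f = 0 := by
    apply eigen_vanish N a ha haN c (g - s • f)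
    · intro x hx
      simp [hf x hx, hg x hx]
    · rw [Jop_sub, Jop_smul, hJf, hJg]
      funext x
      simp only [Pi.sub_apply, Pi.smul_apply, smul_eq_mul]
      ring
    · simp only [Pi.sub_apply, Pi.smul_apply, smul_eq_mul, hs]
      push_cast at hfa ⊢
      field_simp
      ring
  exact sub_eq_zero.1 hh

lemma mem_supportedIn (f : ZMod N → ℂ) (S : Set (ZMod N)) :
    f ∈ supportedIn N S ↔ ∀ x ∉ S, f x = 0 := Iff.rfl

lemma mem_Ca_iff (a : ℤ) (f : ZMod N → ℂ) :
    f ∈ Ca N a ↔ (∀ x ∉ dInterval N a, f x = 0) ∧ (∀ x ∉ dInterval N a, dft N f x = 0) :=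
  Iff.rfl

lemma Jop_mem_Ca (a : ℤ) (f : ZMod N → ℂ) (hf : f ∈ Ca N a) : Jop N a f ∈ Ca N a := by
  rw [mem_Ca_iff] at hf ⊢
  refine ⟨Jop_supported N a f hf.1, fun x hx => ?_⟩
  rw [dft_Jop_comm N a f]
  exact Jop_supported N a (dft N f) hf.2 x hx

/-- The sum-combination helper. -/
lemma sum_comb (g1 g2 g3 : ZMod N → ℂ) :
    (∑ y : ZMod N, g1 y) + (∑ y : ZMod N, g2 y) + (∑ y : ZMod N, g3 y)
      = ∑ y : ZMod N, (g1 y + g2 y + g3 y) := by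
  rw [Finset.sum_add_distrib, Finset.sum_add_distrib]

lemma symm_sum (a : ℤ) (f g : ZMod N → ℂ) :
    ∑ x : ZMod N, (starRingEnd ℂ) (Jop N a f x) * g x
      = ∑ x : ZMod N, (starRingEnd ℂ) (f x) * Jop N a g x := by
  have lhs1 : ∑ x : ZMod N, (starRingEnd ℂ) (Jop N a f x) * g x
      = (∑ x : ZMod N, (acoef N a x : ℂ) * ((starRingEnd ℂ) (f (x+1)) * g x))
        + (∑ x : ZMod N, (bcoef N a x : ℂ) * ((starRingEnd ℂ) (f x) * g x))
        + (∑ x : ZMod N, (acoef N a (x-1) : ℂ) * ((starRingEnd ℂ) (f (x-1)) * g x)) := by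
    rw [sum_comb]
    refine Finset.sum_congr rfl fun x _ => ?_
    simp only [Jop, map_add, map_mul, Complex.conj_ofReal]
    ring
  have t1 : (∑ x : ZMod N, (acoef N a x : ℂ) * ((starRingEnd ℂ) (f (x+1)) * g x))
      = ∑ y : ZMod N, (acoef N a (y-1) : ℂ) * ((starRingEnd ℂ) (f y) * g (y-1)) := by
    rw [← Equiv.sum_comp (Equiv.subRight (1 : ZMod N))
      (fun x => (acoef N a x : ℂ) * ((starRingEnd ℂ) (f (x+1)) * g x))]
    exact Finset.sum_congr rfl fun y _ => by simp
  have t3 : (∑ x : ZMod N, (acoef N a (x-1) : ℂ) * ((starRingEnd ℂ) (f (x-1)) * g x))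
      = ∑ y : ZMod N, (acoef N a y : ℂ) * ((starRingEnd ℂ) (f y) * g (y+1)) := by
    rw [← Equiv.sum_comp (Equiv.addRight (1 : ZMod N))
      (fun x => (acoef N a (x-1) : ℂ) * ((starRingEnd ℂ) (f (x-1)) * g x))]
    exact Finset.sum_congr rfl fun y _ => by simp
  rw [lhs1, t1, t3, sum_comb]
  refine Finset.sum_congr rfl fun y _ => ?_
  simp only [Jop]
  ring

noncomputable def Tmap (N : ℕ) [NeZero N] (a : ℤ) :
    EuclideanSpace ℂ (ZMod N) →ₗ[ℂ] EuclideanSpace ℂ (ZMod N) where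
  toFun f := WithLp.toLp 2 (fun x => Jop N a (fun y => f y) x : ZMod N → ℂ)
  map_add' f g := by
    ext x
    simp only [Jop, PiLp.toLp_apply, PiLp.add_apply, Pi.add_apply]
    ring
  map_smul' s f := by
    ext x
    simp only [Jop, PiLp.toLp_apply, PiLp.smul_apply, Pi.smul_apply, smul_eq_mul, RingHom.id_apply]
    ring

lemma Tmap_isSymmetric (a : ℤ) : (Tmap N a).IsSymmetric := by
  intro f g
  simp only [Tmap, LinearMap.coe_mk, AddHom.coe_mk, PiLp.inner_apply, RCLike.inner_apply, PiLp.toLp_apply]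
  simpa only [mul_comm] using symm_sum N a (fun y => f y) (fun y => g y)

noncomputable def Ca' (N : ℕ) [NeZero N] (a : ℤ) :
    Submodule ℂ (EuclideanSpace ℂ (ZMod N)) :=
  Submodule.comap (WithLp.linearEquiv 2 ℂ (ZMod N → ℂ)).toLinearMap (Ca N a)

lemma mem_Ca'_iff (a : ℤ) (f : EuclideanSpace ℂ (ZMod N)) :
    f ∈ Ca' N a ↔ (fun y => f y) ∈ Ca N a := Iff.rfl

lemma Tmap_mem (a : ℤ) : ∀ v ∈ Ca' N a, Tmap N a v ∈ Ca' N a := by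
  intro v hv
  exact Jop_mem_Ca N a (fun y => v y) hv

/-- General spectral lemma: a symmetric operator restricted to an invariant subspace
has an orthonormal family of eigenvectors spanning it, with real eigenvalues. -/
lemma spectral_general {𝕜 E : Type*} [RCLike 𝕜] [NormedAddCommGroup E] [InnerProductSpace 𝕜 E]
    [FiniteDimensional 𝕜 E] (T : E →ₗ[𝕜] E) (hT : T.IsSymmetric) (p : Submodule 𝕜 E)
    (hp : ∀ v ∈ p, T v ∈ p) (n : ℕ) (hn : Module.finrank 𝕜 ↥p = n) :
    ∃ (μ : Fin n → ℝ) (v : Fin n → E),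
      (∀ i, v i ∈ p) ∧ (∀ i, v i ≠ 0) ∧ (∀ i, T (v i) = ((μ i : ℝ) : 𝕜) • v i) ∧
      (∀ i j, i ≠ j → (inner 𝕜 (v i) (v j) : 𝕜) = 0) := by
  have hsymm : (T.restrict hp).IsSymmetric := hT.restrict_invariant hp
  set b := hsymm.eigenvectorBasis hn with hb
  refine ⟨hsymm.eigenvalues hn, fun i => ((b i : ↥p) : E), fun i => (b i).2, ?_, ?_, ?_⟩
  · intro i h
    exact b.orthonormal.ne_zero i (Submodule.coe_eq_zero.1 h)
  · intro i
    have happ := hsymm.apply_eigenvectorBasis hn i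
    have hval := congrArg (Subtype.val) happ
    rw [LinearMap.restrict_apply] at hval
    rw [show ((⟨T ↑(b i), hp _ (b i).2⟩ : ↥p) : E) = T ↑(b i) from rfl] at hval
    rw [Submodule.coe_smul_of_tower] at hval
    rw [hval]
  · intro i j hij
    have horth : (inner 𝕜 (b i) (b j) : 𝕜) = 0 := b.orthonormal.2 hij
    rw [Submodule.coe_inner] at horth
    exact horth

end DFTaux

open DFTaux in
theorem statement6 (N : ℕ) (hN : 0 < N) (a : ℤ) (h0 : 0 ≤ a) (h1 : 2 * a + 1 ≤ (N : ℤ)) :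
    (∀ f ∈ Ca N a, Jop N a f ∈ Ca N a) ∧
    (∃ μ : Fin (Module.finrank ℂ ↥(Ca N a)) → ℝ, Function.Injective μ ∧
      ∀ i, ∃ f ∈ Ca N a, f ≠ 0 ∧ Jop N a f = (μ i : ℂ) • f) ∧
    (∀ f ∈ Ca N a, f ≠ 0 → (∃ c : ℂ, Jop N a f = c • f) →
      ∃ d : ℂ, dft N f = d • f) := by
  haveI : NeZero N := ⟨hN.ne'⟩
  refine ⟨fun f hf => Jop_mem_Ca N a f hf, ?_, ?_⟩
  · -- simple spectrum
    have hn : Module.finrank ℂ ↥(Ca' N a) = Module.finrank ℂ ↥(Ca N a) :=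
      LinearEquiv.finrank_eq
        (LinearEquiv.ofSubmodule' (WithLp.linearEquiv 2 ℂ (ZMod N → ℂ)) (Ca N a))
    obtain ⟨μ, v, hmem, hne0, heig, horth⟩ :=
      spectral_general (Tmap N a) (Tmap_isSymmetric N a) (Ca' N a) (Tmap_mem N a)
        (Module.finrank ℂ ↥(Ca N a)) hn
    -- the eigenfunctions as plain functions
    set F : Fin (Module.finrank ℂ ↥(Ca N a)) → (ZMod N → ℂ) := fun i => (fun y => v i y)
      with hF
    have hFmem : ∀ i, F i ∈ Ca N a := fun i => hmem i
    have hFne : ∀ i, F i ≠ 0 := by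
      intro i hzero
      apply hne0 i
      ext y
      exact congrFun hzero y
    have hFeig : ∀ i, Jop N a (F i) = ((μ i : ℝ) : ℂ) • F i := by
      intro i
      funext x
      have hx := congrArg (fun v => v x) (heig i)
      simp only [Tmap, LinearMap.coe_mk, AddHom.coe_mk, PiLp.toLp_apply] at hx
      rw [hF]
      simp only [Pi.smul_apply, smul_eq_mul]
      rw [hx]
      simp [PiLp.smul_apply, smul_eq_mul]
    refine ⟨μ, ?_, fun i => ⟨F i, hFmem i, hFne i, hFeig i⟩⟩
    intro i j hij
    by_contra hne
    have hJj : Jop N a (F j) = ((μ i : ℝ) : ℂ) • F j := by rw [hFeig j, hij]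
    obtain ⟨s, hs⟩ := eigen_unique N a h0 h1 ((μ i : ℝ) : ℂ) (F i) (F j)
      ((mem_Ca_iff N a (F i)).1 (hFmem i)).1 ((mem_Ca_iff N a (F j)).1 (hFmem j)).1
      (hFeig i) hJj (hFne i)
    have hinner : (inner ℂ (v i) (v j) : ℂ) = s * (inner ℂ (v i) (v i) : ℂ) := by
      simp only [PiLp.inner_apply, RCLike.inner_apply]
      rw [Finset.mul_sum]
      refine Finset.sum_congr rfl fun x _ => ?_
      have hx := congrFun hs x
      simp only [hF, Pi.smul_apply, smul_eq_mul] at hx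
      rw [hx]
      ring
    have h0' := horth i j hne
    rw [hinner] at h0'
    rcases mul_eq_zero.1 h0' with hs0 | hvv
    · apply hFne j
      rw [hs, hs0, zero_smul]
    · exact hne0 i (inner_self_eq_zero.1 hvv)
  · -- eigenvectors of J in Ca are eigenvectors of dft
    rintro f hf hfne ⟨c, hc⟩
    obtain ⟨hf1, hf2⟩ := (mem_Ca_iff N a f).1 hf
    have hg : Jop N a (dft N f) = c • dft N f := by
      rw [← dft_Jop_comm, hc]
      exact (dftL N).map_smul c f
    exact eigen_unique N a h0 h1 c f (dft N f) hf1 hf2 hc hg hfne
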